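/- Let E be a finite-dimensional real inner product space, θ₀ ∈ E, and let L : E → ℝ be differentiable on a neighborhood of θ₀ with gradient map ∇L differentiable at θ₀ and Hessian H at θ₀ invertible as a continuous linear map on E. Let D be a finite set and for each z ∈ D let ℓ_z : E → ℝ be differentiable on a neighborhood of θ₀. Let K : E → ℝ be differentiable at θ₀, set g_KL = −∇K(θ₀) and h_π(z) = ⟪∇ℓ_z(θ₀), H⁻¹ g_KL⟫. Let m ≤ |D|, let S_π ⊆ D be a size-m subset with h_π(y) ≤ h_π(x) for all x ∈ S_π and y ∈ D \ S_π, and let S₀ ⊆ D be any size-m subset. Suppose θ_{S_π}, θ_{S₀} : ℝ → E are differentiable at 0 with value θ₀ at 0, with ε ↦ (1/m)∑_{z∈S} ∇ℓ_z(θ_S(ε)) continuous at 0 and ∇L(θ_S(ε)) + (ε/m)∑_{z∈S} ∇ℓ_z(θ_S(ε)) = 0 for all ε near 0, for S ∈ {S_π, S₀}. Then the derivative at 0 of ε ↦ K(θ_{S_π}(ε)) − K(θ_{S₀}(ε)) equals Δ_m := (1/m)(∑_{z∈S_π} h_π(z) − ∑_{z∈S₀} h_π(z)), and Δ_m ≥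 0. -/

import Mathlib

open RealInnerProductSpace
open RealInnerProductSpace

lemma grad_inner {E : Type*} [NormedAddCommGroup E] [InnerProductSpace ℝ E]
    [FiniteDimensional ℝ E] (f : E → ℝ) (x v : E) :
    ⟪gradient f x, v⟫ = fderiv ℝ f x v := by
  simp [gradient, InnerProductSpace.toDual_symm_apply]

/-- Self-adjointness of the Hessian (fderiv of gradient). -/
lemma hessian_selfAdjoint {E : Type*} [NormedAddCommGroup E] [InnerProductSpace ℝ E]
    [FiniteDimensional ℝ E] (θ₀ : E) (L : E → ℝ)
    (hL : ∀ᶠ x in nhds θ₀, DifferentiableAt ℝ L x)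
    (hL' : DifferentiableAt ℝ (gradient L) θ₀) (v w : E) :
    ⟪fderiv ℝ (gradient L) θ₀ v, w⟫ = ⟪v, fderiv ℝ (gradient L) θ₀ w⟫ := by
  set H : E →L[ℝ] E := fderiv ℝ (gradient L) θ₀ with hHdef
  set C : E →L[ℝ] (E →L[ℝ] ℝ) := innerSL ℝ with hCdef
  have hf' : ∀ᶠ y in nhds θ₀, HasFDerivAt L (C (gradient L y)) y := by
    filter_upwards [hL] with y hy
    have h1 : HasFDerivAt L (fderiv ℝ L y) y := hy.hasFDerivAt
    have : C (gradient L y) = fderiv ℝ L y := by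
      ext u
      exact grad_inner L y u
    rwa [this]
  have hx : HasFDerivAt (fun y => C (gradient L y)) (C.comp H) θ₀ :=
    C.hasFDerivAt.comp θ₀ hL'.hasFDerivAt
  have := second_derivative_symmetric_of_eventually hf' hx v w
  rw [real_inner_comm (H w) v]; exact this

/-- Core influence-function derivative computation. -/
lemma key_deriv {E : Type*} [NormedAddCommGroup E] [InnerProductSpace ℝ E]
    [FiniteDimensional ℝ E] (θ₀ : E) (L : E → ℝ)
    (hL' : DifferentiableAt ℝ (gradient L) θ₀)
    (H : E ≃L[ℝ] E) (hH : (H : E →L[ℝ] E) = fderiv ℝ (gradient L) θ₀)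
    (K : E → ℝ) (hK : DifferentiableAt ℝ K θ₀)
    (θ : ℝ → E) (hθ : DifferentiableAt ℝ θ 0) (hθ0 : θ 0 = θ₀)
    (G : ℝ → E) (hG : ContinuousAt G 0)
    (hstat : ∀ᶠ ε in nhds (0 : ℝ), gradient L (θ ε) + ε • G ε = 0) :
    HasDerivAt (fun ε => K (θ ε)) ⟪gradient K θ₀, -(H.symm (G 0))⟫ 0 := by
  have hθd : HasDerivAt θ (deriv θ 0) 0 := hθ.hasDerivAt
  -- derivative of F = gradient L ∘ θ
  have hF : HasDerivAt (fun ε => gradient L (θ ε)) ((H : E →L[ℝ] E) (deriv θ 0)) 0 := by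
    rw [hH]
    have h0 : HasFDerivAt (gradient L) (fderiv ℝ (gradient L) θ₀) (θ 0) := by
      rw [hθ0]; exact hL'.hasFDerivAt
    exact h0.comp_hasDerivAt 0 hθd
  -- the same function has derivative -(G 0)
  have hF2 : HasDerivAt (fun ε => gradient L (θ ε)) (-(G 0)) 0 := by
    have heq : (fun ε => gradient L (θ ε)) =ᶠ[nhds (0:ℝ)] fun ε => -(ε • G ε) := by
      filter_upwards [hstat] with ε hε
      exact eq_neg_of_add_eq_zero_left hε
    have h3 : HasDerivAt (fun ε : ℝ => -(ε • G ε)) (-(G 0)) 0 := by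
      rw [hasDerivAt_iff_tendsto_slope]
      have hs : ∀ ε : ℝ, ε ≠ 0 → slope (fun ε : ℝ => -(ε • G ε)) 0 ε = -(G ε) := by
        intro ε hε
        rw [slope_def_module]
        simp [smul_smul, inv_mul_cancel₀ hε]
      have : Filter.Tendsto (fun ε => -(G ε)) (nhdsWithin 0 {(0:ℝ)}ᶜ) (nhds (-(G 0))) :=
        (hG.neg.tendsto).mono_left nhdsWithin_le_nhds
      refine this.congr' ?_
      filter_upwards [self_mem_nhdsWithin] with ε hε
      exact (hs ε hε).symm
    exact h3.congr_of_eventuallyEq heq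
  have huniq : (H : E →L[ℝ] E) (deriv θ 0) = -(G 0) := hF.unique hF2
  have hv : deriv θ 0 = -(H.symm (G 0)) := by
    have := congrArg H.symm huniq
    simpa using this
  have h0 : HasFDerivAt K (fderiv ℝ K θ₀) (θ 0) := by rw [hθ0]; exact hK.hasFDerivAt
  have hKd := h0.comp_hasDerivAt 0 hθd
  rw [grad_inner, ← hv]
  exact hKd

lemma sum_le_topm {α : Type*} [DecidableEq α] (D Sπ S₀ : Finset α) (hπ : α → ℝ)
    (hS₀D : S₀ ⊆ D) (hcard : S₀.card = Sπ.card)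
    (htop : ∀ x ∈ Sπ, ∀ y ∈ D \ Sπ, hπ y ≤ hπ x) :
    ∑ z ∈ S₀, hπ z ≤ ∑ z ∈ Sπ, hπ z := by
  rw [← Finset.sum_inter_add_sum_sdiff S₀ Sπ hπ, ← Finset.sum_inter_add_sum_sdiff Sπ S₀ hπ,
    Finset.inter_comm Sπ S₀]
  gcongr ?_ + ?_
  · exact le_rfl
  have hcards : (S₀ \ Sπ).card = (Sπ \ S₀).card := by
    rw [Finset.card_sdiff_comm hcard]
  rcases (Sπ \ S₀).eq_empty_or_nonempty with he | hne
  · have : (S₀ \ Sπ) = ∅ := by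
      rw [← Finset.card_eq_zero] at he ⊢; omega
    simp [he, this]
  · obtain ⟨x₀, hx₀, hmin⟩ := Finset.exists_min_image (Sπ \ S₀) hπ hne
    have hx₀Sπ : x₀ ∈ Sπ := (Finset.mem_sdiff.mp hx₀).1
    calc ∑ z ∈ S₀ \ Sπ, hπ z ≤ ∑ _z ∈ S₀ \ Sπ, hπ x₀ := by
          refine Finset.sum_le_sum fun y hy => ?_
          have hy' := Finset.mem_sdiff.mp hy
          exact htop x₀ hx₀Sπ y (Finset.mem_sdiff.mpr ⟨hS₀D hy'.1, hy'.2⟩)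
      _ = (Sπ \ S₀).card • hπ x₀ := by rw [Finset.sum_const, hcards]
      _ = ∑ _z ∈ Sπ \ S₀, hπ x₀ := by rw [Finset.sum_const]
      _ ≤ ∑ z ∈ Sπ \ S₀, hπ z := Finset.sum_le_sum fun y hy => hmin y hy


/-- Selection gap (Theorem 2). With the influence-function
setup of Statement 8 for the two size-`m` subsets `S_π` (a top-`m` set for the
PRISM score `h_π z = ⟪∇ℓ_z(θ₀), H⁻¹ g_KL⟫`) and `S₀` (arbitrary), the
derivative at `0` of `ε ↦ K(θ_{S_π} ε) − K(θ_{S₀} ε)` equals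
`Δ_m = (1/m)(∑_{z∈S_π} h_π z − ∑_{z∈S₀} h_π z)`, and `Δ_m ≥ 0`. -/
theorem stmt_15 {E : Type*} [NormedAddCommGroup E] [InnerProductSpace ℝ E]
    [FiniteDimensional ℝ E] (θ₀ : E) (L : E → ℝ)
    (hL : ∀ᶠ x in nhds θ₀, DifferentiableAt ℝ L x)
    (hL' : DifferentiableAt ℝ (gradient L) θ₀)
    (H : E ≃L[ℝ] E) (hH : (H : E →L[ℝ] E) = fderiv ℝ (gradient L) θ₀)
    {α : Type*} [DecidableEq α] (D : Finset α) (ℓ : α → E → ℝ)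
    (hℓ : ∀ z ∈ D, ∀ᶠ x in nhds θ₀, DifferentiableAt ℝ (ℓ z) x)
    (K : E → ℝ) (hK : DifferentiableAt ℝ K θ₀)
    (hπ : α → ℝ)
    (hπdef : ∀ z, hπ z = ⟪gradient (ℓ z) θ₀, H.symm (-(gradient K θ₀))⟫)
    (m : ℕ) (hm : m ≤ D.card)
    (Sπ S₀ : Finset α) (hSπD : Sπ ⊆ D) (hS₀D : S₀ ⊆ D)
    (hSπcard : Sπ.card = m) (hS₀card : S₀.card = m)
    (htop : ∀ x ∈ Sπ, ∀ y ∈ D \ Sπ, hπ y ≤ hπ x)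
    (θπ θz : ℝ → E)
    (hθπ : DifferentiableAt ℝ θπ 0) (hθπ0 : θπ 0 = θ₀)
    (hθz : DifferentiableAt ℝ θz 0) (hθz0 : θz 0 = θ₀)
    (hcontπ : ContinuousAt
      (fun ε : ℝ => ((m : ℝ))⁻¹ • ∑ z ∈ Sπ, gradient (ℓ z) (θπ ε)) 0)
    (hcontz : ContinuousAt
      (fun ε : ℝ => ((m : ℝ))⁻¹ • ∑ z ∈ S₀, gradient (ℓ z) (θz ε)) 0)
    (hstatπ : ∀ᶠ ε in nhds (0 : ℝ),
      gradient L (θπ ε) + (ε / (m : ℝ)) • ∑ z ∈ Sπ, gradient (ℓ z) (θπ ε) = 0)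
    (hstatz : ∀ᶠ ε in nhds (0 : ℝ),
      gradient L (θz ε) + (ε / (m : ℝ)) • ∑ z ∈ S₀, gradient (ℓ z) (θz ε) = 0) :
    deriv (fun ε => K (θπ ε) - K (θz ε)) 0 =
        (1 / (m : ℝ)) * (∑ z ∈ Sπ, hπ z - ∑ z ∈ S₀, hπ z) ∧
    0 ≤ (1 / (m : ℝ)) * (∑ z ∈ Sπ, hπ z - ∑ z ∈ S₀, hπ z) := by
  have hHsa : ∀ v w : E, ⟪(H : E →L[ℝ] E) v, w⟫ = ⟪v, (H : E →L[ℝ] E) w⟫ := by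
    intro v w; rw [hH]; exact hessian_selfAdjoint θ₀ L hL hL' v w
  have hHsymm : ∀ a b : E, ⟪H.symm a, b⟫ = ⟪a, H.symm b⟫ := by
    intro a b
    calc ⟪H.symm a, b⟫ = ⟪H.symm a, (H : E →L[ℝ] E) (H.symm b)⟫ := by
          rw [ContinuousLinearEquiv.coe_coe, H.apply_symm_apply]
      _ = ⟪(H : E →L[ℝ] E) (H.symm a), H.symm b⟫ := (hHsa _ _).symm
      _ = ⟪a, H.symm b⟫ := by rw [ContinuousLinearEquiv.coe_coe, H.apply_symm_apply]
  have hmain : ∀ (S : Finset α) (θ : ℝ → E), DifferentiableAt ℝ θ 0 → θ 0 = θ₀ →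
      ContinuousAt (fun ε : ℝ => ((m : ℝ))⁻¹ • ∑ z ∈ S, gradient (ℓ z) (θ ε)) 0 →
      (∀ᶠ ε in nhds (0 : ℝ),
        gradient L (θ ε) + (ε / (m : ℝ)) • ∑ z ∈ S, gradient (ℓ z) (θ ε) = 0) →
      HasDerivAt (fun ε => K (θ ε)) ((1 / (m : ℝ)) * ∑ z ∈ S, hπ z) 0 := by
    intro S θ hθ hθ0 hcont hstat
    set G : ℝ → E := fun ε => ((m : ℝ))⁻¹ • ∑ z ∈ S, gradient (ℓ z) (θ ε) with hGdef
    have hstat' : ∀ᶠ ε in nhds (0 : ℝ), gradient L (θ ε) + ε • G ε = 0 := by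
      filter_upwards [hstat] with ε hε
      rw [hGdef]
      rwa [div_eq_mul_inv, mul_smul] at hε
    have hd := key_deriv θ₀ L hL' H hH K hK θ hθ hθ0 G hcont hstat'
    have hval : ⟪gradient K θ₀, -(H.symm (G 0))⟫ = (1 / (m : ℝ)) * ∑ z ∈ S, hπ z := by
      have hG0 : G 0 = ((m : ℝ))⁻¹ • ∑ z ∈ S, gradient (ℓ z) θ₀ := by rw [hGdef]; simp [hθ0]
      set w : E := ∑ z ∈ S, gradient (ℓ z) θ₀ with hw
      have hsum : ∑ z ∈ S, hπ z = ⟪w, H.symm (-(gradient K θ₀))⟫ := by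
        rw [hw, sum_inner]
        exact Finset.sum_congr rfl fun z _ => hπdef z
      have h2 : ⟪w, H.symm (-(gradient K θ₀))⟫ = -⟪gradient K θ₀, H.symm w⟫ := by
        rw [← hHsymm w (-(gradient K θ₀)), inner_neg_right, real_inner_comm]
      rw [hG0, map_smul, inner_neg_right, real_inner_smul_right, hsum, h2, one_div]
      ring
    rwa [hval] at hd
  have hdπ := hmain Sπ θπ hθπ hθπ0 hcontπ hstatπ
  have hdz := hmain S₀ θz hθz hθz0 hcontz hstatz
  have hsub := hdπ.sub hdz
  constructor
  · rw [show (fun ε => K (θπ ε) - K (θz ε)) = ((fun ε => K (θπ ε)) - fun ε => K (θz ε)) from rfl, hsub.deriv]; ring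
  · have hsums : ∑ z ∈ S₀, hπ z ≤ ∑ z ∈ Sπ, hπ z :=
      sum_le_topm D Sπ S₀ hπ hS₀D (by rw [hSπcard, hS₀card]) htop
    have : (0:ℝ) ≤ 1 / (m : ℝ) := by positivity
    have := mul_nonneg this (sub_nonneg.mpr hsums)
    linarith
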